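/- Suppose x ∈ M does not lie in Fil¹M, where M is a strongly divisible module with adapted basis (e₁,…,e_d) for integers n₁,…,n_d ∈ {0,1}. Then there exists f ∈ Fil¹M^∨ (i.e., an S-linear f: M → S with f(Fil¹M) ⊆ Fil¹S) such that f(x) ∉ Fil¹S. Explicitly, writing x = Σ sᵢeᵢ, some sᵢ ∉ Filⁿⁱ S, and f defined by f(eᵢ) = E(u)^{1−nᵢ}, f(eⱼ) = 0 for j ≠ i, works. -/

import Mathlib

/-- (Separation step in Proposition 2.1.4.)  Let `M` be strongly
divisible with adapted basis `(e₁,…,e_d)` for integers `nᵢ ∈ {0,1}`, and let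
`x ∉ Fil¹M`.  Then there is `f ∈ Fil¹M^∨` (an `S`-linear `f : M → S` with
`f(Fil¹M) ⊆ Fil¹S`) such that `f(x) ∉ Fil¹S`.  Explicitly, writing `x = Σ sᵢeᵢ`,
some `sᵢ ∉ Filⁿⁱ S`, and the functional `eᵢ ↦ E^{1−nᵢ}`, `eⱼ ↦ 0 (j ≠ i)` works:
i.e. `y ↦ E^{1−nᵢ}·(coordinate i of y)` maps `Fil¹M` into `Fil¹S` but `x`
outside of `Fil¹S`. -/
theorem stmt_7 {S : Type*} [CommRing S]
    (FilS : Ideal S) (E : S) (hE : E ∈ FilS)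
    {M : Type*} [AddCommGroup M] [Module S M]
    {d : ℕ} (b : Module.Basis (Fin d) S M)
    (n : Fin d → ℕ) (hn : ∀ i, n i ≤ 1)
    (FilM : Submodule S M)
    (hadapted : ∀ y : M, y ∈ FilM ↔ ∀ i, b.repr y i ∈ (FilS ^ (n i) : Ideal S))
    (x : M) (hx : x ∉ FilM) :
    (∃ f : M →ₗ[S] S, (∀ y ∈ FilM, f y ∈ FilS) ∧ f x ∉ FilS) ∧
      ∃ i : Fin d, b.repr x i ∉ (FilS ^ (n i) : Ideal S) ∧
        (∀ y ∈ FilM, E ^ (1 - n i) * b.repr y i ∈ FilS) ∧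
        E ^ (1 - n i) * b.repr x i ∉ FilS := by
  have h1 : ¬ ∀ i, b.repr x i ∈ (FilS ^ (n i) : Ideal S) := fun h => hx ((hadapted x).mpr h)
  push_neg at h1
  obtain ⟨i, hi⟩ := h1
  have h0 : n i ≠ 0 := by
    intro h; exact hi (by simp [h])
  have hni : n i = 1 := by have := hn i; omega
  have hxi : b.repr x i ∉ FilS := by simpa [hni] using hi
  have hcoord : ∀ y ∈ FilM, b.repr y i ∈ FilS := by
    intro y hy
    have := (hadapted y).mp hy i
    simpa [hni] using this
  refine ⟨⟨b.coord i, fun y hy => by simpa using hcoord y hy, by simpa using hxi⟩,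
    i, hi, fun y hy => by simpa [hni] using hcoord y hy, by simpa [hni] using hxi⟩
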